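/- Let P, Q : ℂ → ℂ be analytic at z₀ with P(z₀) = Q(z₀), and suppose there is a function F : ℂ → ℂ analytic at z₀ with F(z₀) = z₀ such that P(z) = Q(F(z)) for all z near z₀ and F(F(z)) = z for all z near z₀. Then either P and Q agree on a neighborhood of z₀, or P′(z₀) = −Q′(z₀). -/

import Mathlib

/-- If P = Q ∘ F near z₀ with F an involution fixing z₀ and P(z₀) = Q(z₀), then
either P and Q agree near z₀, or P′(z₀) = −Q′(z₀). -/
theorem stmt1 (P Q F : ℂ → ℂ) (z₀ : ℂ) (hP : AnalyticAt ℂ P z₀) (hQ : AnalyticAt ℂ Q z₀)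
    (hF : AnalyticAt ℂ F z₀) (hPQ : P z₀ = Q z₀) (hFfix : F z₀ = z₀)
    (hcomp : ∀ᶠ z in nhds z₀, P z = Q (F z))
    (hinv : ∀ᶠ z in nhds z₀, F (F z) = z) :
    (∀ᶠ z in nhds z₀, P z = Q z) ∨ deriv P z₀ = -deriv Q z₀ := by
  have hFd : DifferentiableAt ℂ F z₀ := hF.differentiableAt
  have hQd : DifferentiableAt ℂ Q z₀ := hQ.differentiableAt
  set a : ℂ := deriv F z₀ with ha
  -- deriv P z₀ = deriv Q z₀ * a
  have hdP : deriv P z₀ = deriv Q z₀ * a := by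
    have h1 : deriv P z₀ = deriv (Q ∘ F) z₀ :=
      Filter.EventuallyEq.deriv_eq (by filter_upwards [hcomp] with z hz; exact hz)
    rw [h1, deriv_comp z₀ (by rw [hFfix]; exact hQd) hFd, hFfix]
  -- a^2 = 1
  have hFFd : DifferentiableAt ℂ F (F z₀) := by rw [hFfix]; exact hFd
  have ha2 : a * a = 1 := by
    have h1 : deriv (F ∘ F) z₀ = deriv (fun z => z) z₀ :=
      Filter.EventuallyEq.deriv_eq (by filter_upwards [hinv] with z hz; exact hz)
    have h2 : deriv (F ∘ F) z₀ = a * a := by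
      rw [deriv_comp z₀ hFFd hFd, hFfix]
    rw [h2, deriv_id''] at h1
    exact h1
  have hcases : a = 1 ∨ a = -1 := by
    have : (a - 1) * (a + 1) = 0 := by ring_nf; linear_combination ha2
    rcases mul_eq_zero.mp this with h | h
    · left; linear_combination h
    · right; linear_combination h
  rcases hcases with h1 | h1
  · -- a = 1 : show F = id near z₀, hence P = Q near z₀
    left
    set g : ℂ → ℂ := fun z => F z - z with hg
    have hganal : AnalyticAt ℂ g z₀ := hF.sub analyticAt_id
    have hgF : ∀ᶠ z in nhds z₀, g (F z) = -(g z) := by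
      filter_upwards [hinv] with z hz
      simp only [hg]
      rw [hz]; ring
    -- main claim: g is eventually 0
    have hg0 : ∀ᶠ z in nhds z₀, g z = 0 := by
      rcases eq_or_ne (analyticOrderAt g z₀) ⊤ with ho | ho
      · exact analyticOrderAt_eq_top.mp ho
      · exfalso
        lift (analyticOrderAt g z₀) to ℕ using ho with n hn
        obtain ⟨h, hhanal, hh0, hrep⟩ := (hganal.analyticOrderAt_eq_natCast (n := n)).mp hn.symm
        -- slope limit
        have hslope : Filter.Tendsto (fun z => (F z - z₀) / (z - z₀))
            (nhdsWithin z₀ {z₀}ᶜ) (nhds 1) := by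
          have hd : HasDerivAt F a z₀ := hFd.hasDerivAt
          rw [h1] at hd
          have := hasDerivAt_iff_tendsto_slope.mp hd
          refine this.congr (fun z => ?_)
          simp [slope, hFfix, div_eq_inv_mul]
        have hFtend : Filter.Tendsto F (nhdsWithin z₀ {z₀}ᶜ) (nhds z₀) := by
          have : Filter.Tendsto F (nhds z₀) (nhds z₀) := by
            simpa [hFfix] using hF.continuousAt.tendsto
          exact this.mono_left nhdsWithin_le_nhds
        have hhtend : Filter.Tendsto (fun z => h (F z)) (nhdsWithin z₀ {z₀}ᶜ)
            (nhds (h z₀)) := hhanal.continuousAt.tendsto.comp hFtend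
        have hhtend2 : Filter.Tendsto h (nhdsWithin z₀ {z₀}ᶜ) (nhds (h z₀)) :=
          hhanal.continuousAt.tendsto.mono_left nhdsWithin_le_nhds
        set φ : ℂ → ℂ := fun z => ((F z - z₀) / (z - z₀)) ^ n * (h (F z) / h z) with hφ
        have htendφ : Filter.Tendsto φ (nhdsWithin z₀ {z₀}ᶜ)
            (nhds ((1 : ℂ) ^ n * (h z₀ / h z₀))) :=
          ((hslope.pow n).mul (hhtend.div hhtend2 hh0))
        have hval : (1 : ℂ) ^ n * (h z₀ / h z₀) = 1 := by
          rw [one_pow, div_self hh0, one_mul]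
        rw [hval] at htendφ
        -- φ is eventually -1
        have hhne : ∀ᶠ z in nhds z₀, h z ≠ 0 :=
          hhanal.continuousAt.eventually_ne hh0
        have hFmem : ∀ᶠ z in nhds z₀, g (F z) = (F z - z₀) ^ n • h (F z) := by
          have : Filter.Tendsto F (nhds z₀) (nhds z₀) := by
            simpa [hFfix] using hF.continuousAt.tendsto
          exact this.eventually hrep
        have hφeq : ∀ᶠ z in nhdsWithin z₀ {z₀}ᶜ, φ z = -1 := by
          filter_upwards [eventually_nhdsWithin_of_eventually_nhds hrep,
            eventually_nhdsWithin_of_eventually_nhds hFmem,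
            eventually_nhdsWithin_of_eventually_nhds hgF,
            eventually_nhdsWithin_of_eventually_nhds hhne,
            self_mem_nhdsWithin] with z hz hzF hzg hzh hzne
          have hzsub : (z - z₀) ≠ 0 := sub_ne_zero.mpr hzne
          have key : (F z - z₀) ^ n * h (F z) = -((z - z₀) ^ n * h z) := by
            have := hzg
            rw [hzF, hz] at this
            simpa [smul_eq_mul] using this
          simp only [hφ, div_pow, div_mul_div_comm]
          rw [key]
          field_simp
        have : (1 : ℂ) = -1 :=
          tendsto_nhds_unique htendφ (tendsto_const_nhds.congr' (by filter_upwards [hφeq] with z hz; exact hz.symm))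
        norm_num at this
    filter_upwards [hcomp, hg0] with z hz hz0
    have : F z = z := by have := hz0; simp only [hg] at this; linear_combination this
    rw [hz, this]
  · right
    rw [hdP, h1]; ring
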